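/- Let V and H be real inner product spaces and D : V → H a linear map. Let f̃ and f̃_h be linear functionals on V, and suppose C ≥ 0 is such that |(f̃ − f̃_h)(v)| ≤ C ‖D v‖ for all v ∈ V. Assume ũ ∈ V satisfies ⟨D ũ, D w⟩ = f̃(w) for all w ∈ V, there exists û ∈ V with ⟨D û, D w⟩ = f̃_h(w) for all w ∈ V, and σ̃ ∈ H satisfies ⟨σ̃, D w⟩ = f̃_h(w) for all w ∈ V. Then for every s̃ ∈ V: ‖D(ũ − s̃)‖ ≤ C + ‖D s̃ − σ̃‖. -/

import Mathlib

open RealInnerProductSpace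

/-- Bound (4.19) on the energy distance between the exact dual solution
and the potential reconstruction. -/
theorem dual_solution_reconstruction_bound
    {V H : Type*} [NormedAddCommGroup V] [InnerProductSpace ℝ V]
    [NormedAddCommGroup H] [InnerProductSpace ℝ H]
    (D : V →ₗ[ℝ] H) (ftilde ftildeh : V →ₗ[ℝ] ℝ) (C : ℝ) (hC : 0 ≤ C)
    (hpert : ∀ v : V, |(ftilde - ftildeh) v| ≤ C * ‖D v‖)
    (utilde : V) (σtilde : H)
    (hutilde : ∀ w : V, ⟪D utilde, D w⟫ = ftilde w)
    (huhat : ∃ uhat : V, ∀ w : V, ⟪D uhat, D w⟫ = ftildeh w)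
    (hσtilde : ∀ w : V, ⟪σtilde, D w⟫ = ftildeh w)
    (stilde : V) :
    ‖D (utilde - stilde)‖ ≤ C + ‖D stilde - σtilde‖ := by
  obtain ⟨uhat, huhat⟩ := huhat
  -- stability: ‖D(ũ − û)‖ ≤ C
  have h1 : ‖D (utilde - uhat)‖ ≤ C := by
    have key : ‖D (utilde - uhat)‖ ^ 2 ≤ C * ‖D (utilde - uhat)‖ := by
      have : ⟪D (utilde - uhat), D (utilde - uhat)⟫ =
          (ftilde - ftildeh) (utilde - uhat) := by
        simp only [map_sub, inner_sub_left, inner_sub_right, hutilde, huhat, LinearMap.sub_apply] <;> ring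
      calc ‖D (utilde - uhat)‖ ^ 2 = ⟪D (utilde - uhat), D (utilde - uhat)⟫ := by
            rw [real_inner_self_eq_norm_sq]
        _ ≤ |(ftilde - ftildeh) (utilde - uhat)| := by rw [this]; exact le_abs_self _
        _ ≤ C * ‖D (utilde - uhat)‖ := hpert _
    rcases eq_or_lt_of_le (norm_nonneg (D (utilde - uhat))) with h | h
    · rw [← h]; exact hC
    · nlinarith [key]
  -- two-energies: ‖D(û − s̃)‖ ≤ ‖D s̃ − σ̃‖
  have h2 : ‖D (uhat - stilde)‖ ≤ ‖D stilde - σtilde‖ := by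
    have key : ‖D (uhat - stilde)‖ ^ 2 ≤ ‖D stilde - σtilde‖ * ‖D (uhat - stilde)‖ := by
      have : ⟪D (uhat - stilde), D (uhat - stilde)⟫ =
          ⟪σtilde - D stilde, D (uhat - stilde)⟫ := by
        simp only [map_sub, inner_sub_left, inner_sub_right, huhat, hσtilde, LinearMap.sub_apply] <;> ring
      calc ‖D (uhat - stilde)‖ ^ 2 = ⟪D (uhat - stilde), D (uhat - stilde)⟫ := by
            rw [real_inner_self_eq_norm_sq]
        _ = ⟪σtilde - D stilde, D (uhat - stilde)⟫ := this
        _ ≤ ‖σtilde - D stilde‖ * ‖D (uhat - stilde)‖ := real_inner_le_norm _ _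
        _ = ‖D stilde - σtilde‖ * ‖D (uhat - stilde)‖ := by rw [norm_sub_rev]
    rcases eq_or_lt_of_le (norm_nonneg (D (uhat - stilde))) with h | h
    · rw [← h]; positivity
    · nlinarith [key]
  calc ‖D (utilde - stilde)‖ = ‖D (utilde - uhat) + D (uhat - stilde)‖ := by
        rw [← map_add, sub_add_sub_cancel]
    _ ≤ ‖D (utilde - uhat)‖ + ‖D (uhat - stilde)‖ := norm_add_le _ _
    _ ≤ C + ‖D stilde - σtilde‖ := add_le_add h1 h2
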